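/- arXiv:2008.03133 — 2 statements merged into one kernel-verified Lean document; each statement's English description precedes it below -/
import Mathlib

section
/- Let (M_n)_{n∈ℕ} be a countable collection of supermartingales admitting a common real lower bound B (i.e., M_n(s) ≥ B for all n and all situations s), and let (λ_n)_{n∈ℕ} be non-negative reals whose series converges to a real number λ = Σ_n λ_n. Then for every situation s the partial sums Σ_{n=0}^{N} λ_n·M_n(s) converge in ℝ̄ as N → ∞, and the process M defined by M(s) := lim_{N→∞} Σ_{n=0}^{N} λ_n·M_n(s) is a bounded below supermartingale; if moreover every M_n is non-negative, then so is M. -/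
open Filter Topology

noncomputable section

/-- Addition on the extended reals with the convention `(+∞) + (−∞) = (−∞) + (+∞) = +∞`. -/
def eadd (a b : EReal) : EReal := if a = ⊤ ∨ b = ⊤ then ⊤ else a + b

/-- An extended real variable is bounded below. -/
def BddBelowF {Y : Type*} (f : Y → EReal) : Prop := ∃ M : ℝ, ∀ y, (M : EReal) ≤ f y

/-- (E1): constants are preserved. -/
def UE1 {Y : Type*} (E : (Y → EReal) → EReal) : Prop :=
  ∀ c : ℝ, E (fun _ => (c : EReal)) = (c : EReal)

/-- (E2): sub-additivity on bounded below variables. -/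
def UE2 {Y : Type*} (E : (Y → EReal) → EReal) : Prop :=
  ∀ f g : Y → EReal, BddBelowF f → BddBelowF g →
    E (fun y => eadd (f y) (g y)) ≤ eadd (E f) (E g)

/-- (E3): positive homogeneity on bounded below variables. -/
def UE3 {Y : Type*} (E : (Y → EReal) → EReal) : Prop :=
  ∀ l : ℝ, 0 < l → ∀ f : Y → EReal, BddBelowF f →
    E (fun y => (l : EReal) * f y) = (l : EReal) * E f

/-- (E4): monotonicity on bounded below variables. -/
def UE4 {Y : Type*} (E : (Y → EReal) → EReal) : Prop :=
  ∀ f g : Y → EReal, BddBelowF f → BddBelowF g → (∀ y, f y ≤ g y) → E f ≤ E g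

/-- (E5): continuity with respect to non-decreasing sequences of non-negative variables. -/
def UE5 {Y : Type*} (E : (Y → EReal) → EReal) : Prop :=
  ∀ (fs : ℕ → Y → EReal) (f : Y → EReal),
    (∀ n y, 0 ≤ fs n y) → (∀ n y, fs n y ≤ fs (n + 1) y) →
    (∀ y, Tendsto (fun n => fs n y) atTop (𝓝 (f y))) →
    Tendsto (fun n => E (fs n)) atTop (𝓝 (E f))

/-- An upper expectation: a map satisfying (E1)–(E5). -/
def IsUpperExpectation {Y : Type*} (E : (Y → EReal) → EReal) : Prop :=
  UE1 E ∧ UE2 E ∧ UE3 E ∧ UE4 E ∧ UE5 E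

/-- The situation formed by the first `n` states of the path `ω`. -/
def pfx {X : Type*} (ω : ℕ → X) (n : ℕ) : List X := List.ofFn (fun i : Fin n => ω i)

/-- The cylinder event of all paths that go through the situation `s`. -/
def Gamma {X : Type*} (s : List X) : Set (ℕ → X) := {ω | pfx ω s.length = s}

/-- A process is bounded below. -/
def BddBelowP {X : Type*} (M : List X → EReal) : Prop := ∃ B : ℝ, ∀ t, (B : EReal) ≤ M t

/-- A supermartingale for the imprecise probabilities tree `Q`. -/
def IsSupermartingale {X : Type*} (Q : List X → (X → EReal) → EReal)
    (M : List X → EReal) : Prop :=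
  ∀ s : List X, Q s (fun x => M (s ++ [x])) ≤ M s

/-- The pathwise limit inferior of a process. -/
def liminfP {X : Type*} (M : List X → EReal) (ω : ℕ → X) : EReal :=
  Filter.liminf (fun n => M (pfx ω n)) atTop

/-- The game-theoretic upper expectation `E_V(f | s)`. -/
def upExp {X : Type*} (Q : List X → (X → EReal) → EReal)
    (f : (ℕ → X) → EReal) (s : List X) : EReal :=
  sInf {x : EReal | ∃ M : List X → EReal, IsSupermartingale Q M ∧ BddBelowP M ∧
    (∀ ω ∈ Gamma s, f ω ≤ liminfP M ω) ∧ M s = x}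

/-- An event `A` is strictly almost sure within `Γ(s)`: some `s`-test supermartingale
converges to `+∞` on every path of `Γ(s)` outside `A`. -/
def StrictlyAS {X : Type*} (Q : List X → (X → EReal) → EReal) (s : List X)
    (A : Set (ℕ → X)) : Prop :=
  ∃ T : List X → EReal, IsSupermartingale Q T ∧ (∀ t, 0 ≤ T t) ∧ T s = 1 ∧
    ∀ ω ∈ Gamma s, ω ∉ A → Tendsto (fun n => T (pfx ω n)) atTop (𝓝 (⊤ : EReal))

/-- An `n`-measurable global variable only depends on the first `n` states. -/
def NMeasurable {X : Type*} (n : ℕ) (f : (ℕ → X) → EReal) : Prop :=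
  ∀ ω ω' : ℕ → X, pfx ω n = pfx ω' n → f ω = f ω'

/-- A finitary global variable is `n`-measurable for some `n`. -/
def Finitary {X : Type*} (f : (ℕ → X) → EReal) : Prop := ∃ n : ℕ, NMeasurable n f

/-- The bounded below global variables that are pointwise limits of finitary variables. -/
def VbLim {X : Type*} : Set ((ℕ → X) → EReal) :=
  {f | BddBelowF f ∧ ∃ gs : ℕ → (ℕ → X) → EReal, (∀ n, Finitary (gs n)) ∧
    ∀ ω, Tendsto (fun n => gs n ω) atTop (𝓝 (f ω))}

section Aux

open Filter Topology

lemma eadd_eq_add {a b : EReal} (ha : a ≠ ⊥) (hb : b ≠ ⊥) : eadd a b = a + b := by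
  unfold eadd
  split_ifs with h
  · rcases h with h | h
    · subst h; exact (EReal.top_add_of_ne_bot hb).symm
    · subst h; exact (EReal.add_top_of_ne_bot ha).symm
  · rfl

lemma ne_bot_of_nonneg {a : EReal} (h : 0 ≤ a) : a ≠ ⊥ :=
  (lt_of_lt_of_le EReal.bot_lt_zero h).ne'

lemma ecoe_sum (F : Finset ℕ) (f : ℕ → ℝ) :
    ((∑ n ∈ F, f n : ℝ) : EReal) = ∑ n ∈ F, (f n : EReal) := by
  classical
  induction F using Finset.induction_on with
  | empty => simp
  | @insert a s h ih => rw [Finset.sum_insert h, Finset.sum_insert h, EReal.coe_add, ih]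

end Aux

/-- countable non-negative convex-type combinations of supermartingales with a
common real lower bound converge and yield a bounded below supermartingale, which is
non-negative whenever all the supermartingales involved are non-negative. -/
theorem stmt4 {X : Type*} [Fintype X] [Nonempty X]
    (Q : List X → (X → EReal) → EReal) (hQ : ∀ s : List X, IsUpperExpectation (Q s))
    (M : ℕ → List X → EReal) (hM : ∀ n, IsSupermartingale Q (M n))
    (B : ℝ) (hB : ∀ n t, (B : EReal) ≤ M n t)
    (lam : ℕ → ℝ) (hlam : ∀ n, 0 ≤ lam n) (l : ℝ) (hsum : HasSum lam l) :
    ∃ S : List X → EReal,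
      (∀ t, Tendsto (fun N => ∑ n ∈ Finset.range N, ((lam n : EReal) * M n t))
        atTop (𝓝 (S t))) ∧
      IsSupermartingale Q S ∧ BddBelowP S ∧
      ((∀ n t, 0 ≤ M n t) → ∀ t, 0 ≤ S t) := by
  classical
  -- the non-negative shifted processes
  set g : ℕ → List X → EReal := fun n t => M n t + ((-B : ℝ) : EReal) with hg
  have hg0 : ∀ n t, (0 : EReal) ≤ g n t := by
    intro n t
    have := add_le_add_left (hB n t) ((-B : ℝ) : EReal)
    rwa [← EReal.coe_add, add_neg_cancel, EReal.coe_zero] at this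
  have hgne : ∀ n t, g n t ≠ ⊥ := fun n t => ne_bot_of_nonneg (hg0 n t)
  have hMne : ∀ n t, M n t ≠ ⊥ := fun n t => (lt_of_lt_of_le
    (EReal.bot_lt_coe B) (hB n t)).ne'
  have hterm : ∀ n t, (0 : EReal) ≤ (lam n : EReal) * g n t := fun n t =>
    mul_nonneg (by exact_mod_cast hlam n) (hg0 n t)
  -- partial sums of the shifted processes, and their supremum
  set TN : ℕ → List X → EReal := fun N t => ∑ n ∈ Finset.range N,
    (lam n : EReal) * g n t with hTN
  set T : List X → EReal := fun t => ⨆ N, TN N t with hT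
  set S : List X → EReal := fun t => T t + ((l * B : ℝ) : EReal) with hS
  have hTNmono : ∀ t, Monotone (fun N => TN N t) := by
    intro t a b hab
    exact Finset.sum_le_sum_of_subset_of_nonneg (Finset.range_subset_range.2 hab)
      (fun i _ _ => hterm i t)
  have hTN0 : ∀ t, (0 : EReal) ≤ TN 0 t := by intro t; simp [hTN]
  have hTNnn : ∀ N t, (0 : EReal) ≤ TN N t := fun N t =>
    Finset.sum_nonneg fun i _ => hterm i t
  have hTnn : ∀ t, (0 : EReal) ≤ T t := fun t => le_trans (hTN0 t) (le_iSup (fun N => TN N t) 0)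
  have hTtend : ∀ t, Tendsto (fun N => TN N t) atTop (𝓝 (T t)) := fun t =>
    tendsto_atTop_iSup (hTNmono t)
  -- decomposition of each term
  have hdecomp : ∀ n t, (lam n : EReal) * M n t
      = (lam n : EReal) * g n t + ((lam n * B : ℝ) : EReal) := by
    intro n t
    rcases (hlam n).eq_or_lt with h0 | hpos
    · simp [← h0, hg]
    · have key : ∀ a : EReal, a ≠ ⊥ →
          (lam n : EReal) * a = (lam n : EReal) * (a + ((-B : ℝ) : EReal)) + ((lam n * B : ℝ) : EReal) := by
        intro a hb
        induction a using EReal.rec with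
        | bot => exact absurd rfl hb
        | coe r => norm_cast; ring
        | top =>
          rw [EReal.top_add_coe, EReal.mul_top_of_pos (by exact_mod_cast hpos),
            EReal.top_add_of_ne_bot (EReal.coe_ne_bot _)]
      exact key (M n t) (hMne n t)
  -- the partial sums of the original series
  have hsum_eq : ∀ N t, (∑ n ∈ Finset.range N, ((lam n : EReal) * M n t))
      = TN N t + ((∑ n ∈ Finset.range N, lam n * B : ℝ) : EReal) := by
    intro N t
    rw [ecoe_sum, hTN, ← Finset.sum_add_distrib]
    exact Finset.sum_congr rfl fun n _ => hdecomp n t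
  have hCtend : Tendsto (fun N => ((∑ n ∈ Finset.range N, lam n * B : ℝ) : EReal))
      atTop (𝓝 ((l * B : ℝ) : EReal)) :=
    EReal.tendsto_coe.2 (hsum.mul_right B).tendsto_sum_nat
  have hStend : ∀ t, Tendsto (fun N => ∑ n ∈ Finset.range N,
      ((lam n : EReal) * M n t)) atTop (𝓝 (S t)) := by
    intro t
    have hadd : ContinuousAt (fun p : EReal × EReal => p.1 + p.2)
        (T t, ((l * B : ℝ) : EReal)) :=
      EReal.continuousAt_add (Or.inr (EReal.coe_ne_bot _)) (Or.inr (EReal.coe_ne_top _))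
    have := hadd.tendsto.comp ((hTtend t).prodMk_nhds hCtend)
    simpa only [Function.comp_def, ← hsum_eq] using this
  -- basic consequences of the upper-expectation axioms
  have hEzero : ∀ s : List X, Q s (fun _ => (0 : EReal)) = 0 := by
    intro s
    have := (hQ s).1 0
    simpa using this
  have hEnn : ∀ (s : List X) (f : X → EReal), (∀ x, 0 ≤ f x) → 0 ≤ Q s f := by
    intro s f hf
    have h4 := (hQ s).2.2.2.1
    have := h4 (fun _ => (0 : EReal)) f ⟨0, by simp⟩
      ⟨0, by simpa using hf⟩ hf
    simpa [hEzero s] using this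
  -- one-term supermartingale bound
  have hone : ∀ (n : ℕ) (s : List X),
      Q s (fun x => (lam n : EReal) * g n (s ++ [x])) ≤ (lam n : EReal) * g n s := by
    intro n s
    rcases (hlam n).eq_or_lt with h0 | hpos
    · simp only [← h0, EReal.coe_zero, zero_mul]
      rw [hEzero s]
    · have h3 := (hQ s).2.2.1
      rw [h3 (lam n) hpos (fun x => g n (s ++ [x])) ⟨0, by simpa using fun x => hg0 n (s ++ [x])⟩]
      refine mul_le_mul_of_nonneg_left ?_ (by exact_mod_cast hlam n)
      -- Q s (g n (s ++ ·)) ≤ g n s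
      have h2 := (hQ s).2.1 (fun x => M n (s ++ [x])) (fun _ => ((-B : ℝ) : EReal))
        ⟨B, fun x => hB n (s ++ [x])⟩ ⟨-B, fun _ => le_refl _⟩
      have hpt : (fun x => eadd (M n (s ++ [x])) ((-B : ℝ) : EReal))
          = fun x => g n (s ++ [x]) := by
        funext x
        rw [eadd_eq_add (hMne n (s ++ [x])) (EReal.coe_ne_bot _)]
      have hc : Q s (fun _ => ((-B : ℝ) : EReal)) = ((-B : ℝ) : EReal) := (hQ s).1 (-B)
      rw [hpt, hc] at h2
      have hQM : Q s (fun x => M n (s ++ [x])) ≠ ⊥ := by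
        have h4 := (hQ s).2.2.2.1
        have hle := h4 (fun _ => ((B : ℝ) : EReal)) (fun x => M n (s ++ [x]))
          ⟨B, fun _ => le_refl _⟩ ⟨B, fun x => hB n (s ++ [x])⟩ (fun x => hB n (s ++ [x]))
        rw [(hQ s).1 B] at hle
        exact (lt_of_lt_of_le (EReal.bot_lt_coe B) hle).ne'
      rw [eadd_eq_add hQM (EReal.coe_ne_bot _)] at h2
      exact le_trans h2 (add_le_add_left (hM n s) _)
  -- finite combinations
  have hfin : ∀ (N : ℕ) (s : List X),
      Q s (fun x => TN N (s ++ [x])) ≤ TN N s := by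
    intro N s
    induction N with
    | zero =>
      simp only [hTN, Finset.range_zero, Finset.sum_empty]
      rw [hEzero s]
    | succ N ih =>
      have h2 := (hQ s).2.1 (fun x => TN N (s ++ [x]))
        (fun x => (lam N : EReal) * g N (s ++ [x]))
        ⟨0, by simpa using fun x => hTNnn N (s ++ [x])⟩
        ⟨0, by simpa using fun x => hterm N (s ++ [x])⟩
      have hpt : (fun x => eadd (TN N (s ++ [x])) ((lam N : EReal) * g N (s ++ [x])))
          = fun x => TN (N + 1) (s ++ [x]) := by
        funext x
        rw [eadd_eq_add (ne_bot_of_nonneg (hTNnn N (s ++ [x])))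
          (ne_bot_of_nonneg (hterm N (s ++ [x]))), hTN]
        simp [Finset.sum_range_succ]
      rw [hpt] at h2
      rw [eadd_eq_add (ne_bot_of_nonneg (hEnn s _ fun x => hTNnn N (s ++ [x])))
        (ne_bot_of_nonneg (hEnn s _ fun x => hterm N (s ++ [x])))] at h2
      calc Q s (fun x => TN (N + 1) (s ++ [x]))
          ≤ Q s (fun x => TN N (s ++ [x])) + Q s (fun x => (lam N : EReal) * g N (s ++ [x])) := h2
        _ ≤ TN N s + (lam N : EReal) * g N s := add_le_add ih (hone N s)
        _ = TN (N + 1) s := by simp [hTN, Finset.sum_range_succ]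
  -- the supremum process is a supermartingale via continuity (E5)
  have hTsm : ∀ s : List X, Q s (fun x => T (s ++ [x])) ≤ T s := by
    intro s
    have h5 := (hQ s).2.2.2.2
    have htend := h5 (fun N x => TN N (s ++ [x])) (fun x => T (s ++ [x]))
      (fun N x => hTNnn N (s ++ [x]))
      (fun N x => hTNmono (s ++ [x]) (Nat.le_succ N))
      (fun x => hTtend (s ++ [x]))
    refine le_of_tendsto htend (Filter.Eventually.of_forall fun N => ?_)
    exact le_trans (hfin N s) (le_iSup (fun N => TN N s) N)
  refine ⟨S, hStend, ?_, ⟨l * B, fun t => ?_⟩, ?_⟩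
  · -- S is a supermartingale
    intro s
    have h2 := (hQ s).2.1 (fun x => T (s ++ [x])) (fun _ => ((l * B : ℝ) : EReal))
      ⟨0, by simpa using fun x => hTnn (s ++ [x])⟩ ⟨l * B, fun _ => le_refl _⟩
    have hpt : (fun x => eadd (T (s ++ [x])) ((l * B : ℝ) : EReal))
        = fun x => S (s ++ [x]) := by
      funext x
      rw [eadd_eq_add (ne_bot_of_nonneg (hTnn (s ++ [x]))) (EReal.coe_ne_bot _), hS]
    rw [hpt, (hQ s).1 (l * B),
      eadd_eq_add (ne_bot_of_nonneg (hEnn s _ fun x => hTnn (s ++ [x])))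
        (EReal.coe_ne_bot _)] at h2
    exact le_trans h2 (add_le_add_left (hTsm s) _)
  · -- S is bounded below by l * B
    calc ((l * B : ℝ) : EReal) = 0 + ((l * B : ℝ) : EReal) := (zero_add _).symm
      _ ≤ T t + ((l * B : ℝ) : EReal) := add_le_add_left (hTnn t) _
      _ = S t := rfl
  · -- non-negativity
    intro hMnn t
    refine ge_of_tendsto (hStend t) (Filter.Eventually.of_forall fun N => ?_)
    exact Finset.sum_nonneg fun n _ =>
      mul_nonneg (by exact_mod_cast hlam n) (hMnn n t)
end
end

section
/- For every situation s of length n and every bounded below (n+1)-measurable global variable f : Ω → ℝ̄: E_V(f|s) = Q_s(f(s·)), where f(s·) : 𝒳 → ℝ̄ maps each x ∈ 𝒳 to the common value of f on Γ(sx). -/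
open Filter Topology

noncomputable section

section Helpers

lemma tendsto_natCast_top' : Tendsto (fun n : ℕ => ((n : ℝ) : EReal)) atTop (𝓝 ⊤) := by
  rw [EReal.tendsto_nhds_top_iff_real]
  intro x
  filter_upwards [eventually_ge_atTop (⌈x⌉₊ + 1)] with n hn
  have : x < (n : ℝ) := by
    calc x ≤ (⌈x⌉₊ : ℝ) := Nat.le_ceil x
    _ < (n : ℝ) := by exact_mod_cast hn
  exact_mod_cast this

lemma E_top {Y : Type*} {E : (Y → EReal) → EReal} (h1 : UE1 E) (h5 : UE5 E) :
    E (fun _ => (⊤ : EReal)) = ⊤ := by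
  have ht := h5 (fun n _ => ((n : ℝ) : EReal)) (fun _ => ⊤)
    (fun n y => by simp)
    (fun n y => by simp; exact_mod_cast Nat.le_succ n)
    (fun y => tendsto_natCast_top')
  have heq : (fun n : ℕ => E (fun _ => ((n:ℝ):EReal))) = fun n : ℕ => ((n:ℝ):EReal) := by
    funext n; exact h1 n
  rw [heq] at ht
  exact tendsto_nhds_unique ht tendsto_natCast_top'

lemma exists_apply_le {Y : Type*} [Finite Y] [Nonempty Y] {E : (Y → EReal) → EReal}
    (h1 : UE1 E) (h4 : UE4 E) (h5 : UE5 E) (h : Y → EReal) (hb : BddBelowF h) :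
    ∃ y, h y ≤ E h := by
  obtain ⟨y0, hy0⟩ := Finite.exists_min h
  refine ⟨y0, ?_⟩
  by_cases htop : h y0 = ⊤
  · have hh : h = fun _ => (⊤ : EReal) := funext fun y => top_le_iff.1 (htop ▸ hy0 y)
    rw [htop, hh, E_top h1 h5]
  · obtain ⟨B, hB⟩ := hb
    have hne : h y0 ≠ ⊥ := fun hh => by simpa [hh] using hB y0
    obtain ⟨r, hr⟩ : ∃ r : ℝ, h y0 = (r : EReal) :=
      ⟨(h y0).toReal, (EReal.coe_toReal htop hne).symm⟩
    calc h y0 = E (fun _ => (r : EReal)) := by rw [h1 r, hr]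
    _ ≤ E h := h4 _ _ ⟨r, fun _ => le_rfl⟩ ⟨B, hB⟩ (fun y => hr ▸ hy0 y)

lemma pfx_length {X : Type*} (ω : ℕ → X) (n : ℕ) : (pfx ω n).length = n := by simp [pfx]

lemma pfx_getElem {X : Type*} (ω : ℕ → X) {n i : ℕ} (h : i < (pfx ω n).length) :
    (pfx ω n)[i] = ω i := by simp [pfx]

lemma pfx_succ {X : Type*} (ω : ℕ → X) (n : ℕ) : pfx ω (n + 1) = pfx ω n ++ [ω n] := by
  show List.ofFn _ = _
  rw [List.ofFn_succ', List.concat_eq_append]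
  rfl

lemma pfx_prefix {X : Type*} (ω : ℕ → X) {n m : ℕ} (h : n ≤ m) : pfx ω n <+: pfx ω m := by
  induction m, h using Nat.le_induction with
  | base => exact List.prefix_rfl
  | succ m hm ih => rw [pfx_succ]; exact ih.trans (List.prefix_append _ _)

lemma pfx_getD {X : Type*} [Nonempty X] (l : List X) :
    pfx (fun n => l.getD n (Classical.arbitrary X)) l.length = l := by
  apply List.ext_getElem (by simp [pfx])
  intro i h1 h2
  rw [pfx_getElem, List.getD_eq_getElem _ _ h2]

end Helpers

/-- partial compatibility with the local models. For a situation `s` of length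
`n` and a bounded below `(n+1)`-measurable global variable `f`, `E_V(f|s) = Q_s(f(s·))`,
where `f(s·)` maps each `x` to the common value `g x` of `f` on `Γ(s ++ [x])`. -/
theorem stmt6 {X : Type*} [Fintype X] [Nonempty X]
    (Q : List X → (X → EReal) → EReal) (hQ : ∀ s : List X, IsUpperExpectation (Q s))
    (s : List X) (f : (ℕ → X) → EReal)
    (hmeas : NMeasurable (s.length + 1) f) (hbdd : BddBelowF f)
    (g : X → EReal) (hg : ∀ x : X, ∀ ω ∈ Gamma (s ++ [x]), f ω = g x) :
    upExp Q f s = Q s g := by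
  classical
  obtain ⟨h1, h2, h3, h4, h5⟩ := hQ s
  obtain ⟨B, hB⟩ := hbdd
  -- every cylinder is nonempty
  have hgamma : ∀ l : List X, (fun n => l.getD n (Classical.arbitrary X)) ∈ Gamma l :=
    fun l => pfx_getD l
  have hgB : ∀ x, (B : EReal) ≤ g x := fun x => by
    rw [← hg x _ (hgamma (s ++ [x]))]; exact hB _
  apply le_antisymm
  · -- upExp ≤ Q s g
    by_cases htop : Q s g = ⊤
    · rw [htop]; exact le_top
    · have hQb : (B : EReal) ≤ Q s g := by
        calc (B : EReal) = Q s (fun _ => (B : EReal)) := (h1 B).symm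
        _ ≤ Q s g := h4 _ g ⟨B, fun _ => le_rfl⟩ ⟨B, hgB⟩ hgB
      have hQbot : Q s g ≠ ⊥ := fun hh => by simp [hh] at hQb
      obtain ⟨r, hr⟩ : ∃ r : ℝ, Q s g = (r : EReal) :=
        ⟨(Q s g).toReal, (EReal.coe_toReal htop hQbot).symm⟩
      set M : List X → EReal :=
        fun t => if h : s <+: t ∧ s.length < t.length then g (t[s.length]'h.2) else (r : EReal)
        with hM
      have hMval : ∀ t (h : s <+: t ∧ s.length < t.length), M t = g (t[s.length]'h.2) :=
        fun t h => dif_pos h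
      have hMs : M s = (r : EReal) := dif_neg (by simp)
      -- supermartingale
      have hsm : IsSupermartingale Q M := by
        intro t
        by_cases ht : s <+: t ∧ s.length < t.length
        · have hkey : ∀ x : X, M (t ++ [x]) = g (t[s.length]'ht.2) := by
            intro x
            have h2' : s.length < (t ++ [x]).length := by simp; omega
            rw [hMval (t ++ [x]) ⟨ht.1.trans (List.prefix_append t [x]), h2'⟩]
            congr 1
            exact List.getElem_append_left ht.2
          have heq : (fun x => M (t ++ [x])) = fun _ => g (t[s.length]'ht.2) := funext hkey
          rw [heq, hMval t ht]
          set v := g (t[s.length]'ht.2) with hv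
          have hvB : (B : EReal) ≤ v := hgB _
          by_cases hvt : v = ⊤
          · rw [hvt]
            rw [E_top (hQ t).1 (hQ t).2.2.2.2]
          · have hvbot : v ≠ ⊥ := fun hh => by simp [hh] at hvB
            obtain ⟨r', hr'⟩ : ∃ r' : ℝ, v = (r' : EReal) :=
              ⟨v.toReal, (EReal.coe_toReal hvt hvbot).symm⟩
            rw [hr']
            exact le_of_eq ((hQ t).1 r')
        · by_cases hts : t = s
          · subst hts
            have hkey : ∀ x : X, M (t ++ [x]) = g x := by
              intro x
              have hp : t <+: t ++ [x] := List.prefix_append t [x]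
              have hl : t.length < (t ++ [x]).length := by simp
              rw [hMval (t ++ [x]) ⟨hp, hl⟩]
              congr 1
              rw [List.getElem_append_right (le_refl t.length)]
              simp
            have heq : (fun x => M (t ++ [x])) = g := funext hkey
            rw [heq, hMs, ← hr]
          · have hkey : ∀ x : X, M (t ++ [x]) = (r : EReal) := by
              intro x
              refine dif_neg ?_
              rintro ⟨hp, hl⟩
              have hle : s.length ≤ t.length := by simp at hl; omega
              have hs' : s = (t ++ [x]).take s.length := by
                rw [List.prefix_iff_eq_take] at hp; simpa using hp
              rw [List.take_append_of_le_length hle] at hs'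
              rcases lt_or_eq_of_le hle with hlt | heq
              · exact ht ⟨hs' ▸ List.take_prefix _ _, hlt⟩
              · rw [heq, List.take_length] at hs'
                exact hts hs'.symm
            have heq : (fun x => M (t ++ [x])) = fun _ => (r : EReal) := funext hkey
            rw [heq]
            have : M t = (r : EReal) := dif_neg ht
            rw [this]
            exact le_of_eq ((hQ t).1 r)
      -- bounded below
      have hbb : BddBelowP M := by
        refine ⟨min B r, fun t => ?_⟩
        by_cases ht : s <+: t ∧ s.length < t.length
        · rw [hMval t ht]
          exact le_trans (EReal.coe_le_coe_iff.2 (min_le_left B r)) (hgB _)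
        · rw [hM]; simp only []
          rw [dif_neg ht]
          exact EReal.coe_le_coe_iff.2 (min_le_right B r)
      -- liminf condition
      have hlim : ∀ ω ∈ Gamma s, f ω ≤ liminfP M ω := by
        intro ω hω
        have hωs : pfx ω s.length = s := hω
        set x := ω s.length with hx
        have h1' : pfx ω (s.length + 1) = s ++ [x] := by rw [pfx_succ, hωs]
        have hev : ∀ n, s.length + 1 ≤ n → M (pfx ω n) = g x := by
          intro n hn
          have hp : s ++ [x] <+: pfx ω n := h1' ▸ pfx_prefix ω hn
          have hps : s <+: pfx ω n := (List.prefix_append s [x]).trans hp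
          have hl : s.length < (pfx ω n).length := by rw [pfx_length]; omega
          rw [hMval _ ⟨hps, hl⟩]
          congr 1
          have hsl : s.length < (s ++ [x]).length := by simp
          rw [← hp.getElem hsl]
          rw [List.getElem_append_right (le_refl s.length)]
          simp
        have hfg : f ω = g x := hg x ω (by show pfx ω (s ++ [x]).length = s ++ [x]; simpa using h1')
        have : liminfP M ω = g x := by
          unfold liminfP
          have : (fun n => M (pfx ω n)) =ᶠ[atTop] fun _ => g x := by
            filter_upwards [eventually_ge_atTop (s.length + 1)] with n hn
            exact hev n hn
          rw [liminf_congr this, liminf_const]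
        rw [hfg, this]
      have : M s ∈ {x : EReal | ∃ M : List X → EReal, IsSupermartingale Q M ∧ BddBelowP M ∧
          (∀ ω ∈ Gamma s, f ω ≤ liminfP M ω) ∧ M s = x} := ⟨M, hsm, hbb, hlim, rfl⟩
      calc upExp Q f s ≤ M s := sInf_le this
      _ = Q s g := by rw [hMs, hr]
  · -- Q s g ≤ upExp
    apply le_sInf
    rintro v ⟨M, hsm, ⟨C, hC⟩, hlim, rfl⟩
    have hkey : ∀ t : List X, ∃ x : X, M (t ++ [x]) ≤ M t := by
      intro t
      obtain ⟨x, hx⟩ := exists_apply_le (hQ t).1 (hQ t).2.2.2.1 (hQ t).2.2.2.2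
        (fun x => M (t ++ [x])) ⟨C, fun x => hC _⟩
      exact ⟨x, hx.trans (hsm t)⟩
    choose c hc using hkey
    have hMg : ∀ x : X, g x ≤ M (s ++ [x]) := by
      intro x
      set L : ℕ → List X := fun n => Nat.rec (s ++ [x]) (fun _ t => t ++ [c t]) n with hL
      have hL0 : L 0 = s ++ [x] := rfl
      have hLsucc : ∀ n, L (n + 1) = L n ++ [c (L n)] := fun n => rfl
      have hLlen : ∀ n, (L n).length = s.length + 1 + n := by
        intro n
        induction n with
        | zero => simp [hL0]
        | succ n ih => rw [hLsucc]; simp [ih]; omega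
      have hLM : ∀ n, M (L n) ≤ M (L 0) := by
        intro n
        induction n with
        | zero => exact le_rfl
        | succ n ih => rw [hLsucc]; exact (hc (L n)).trans ih
      have hLpre : ∀ n m, n ≤ m → L n <+: L m := by
        intro n m h
        induction m, h using Nat.le_induction with
        | base => exact List.prefix_rfl
        | succ m hm ih => rw [hLsucc]; exact ih.trans (List.prefix_append _ _)
      set ω : ℕ → X := fun n => (L n).getD n (Classical.arbitrary X) with hω
      have hωget : ∀ k i : ℕ, (hi : i < (L k).length) → ω i = (L k)[i] := by
        intro k i hi
        have hii : i < (L i).length := by rw [hLlen]; omega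
        rw [hω]; simp only []
        rw [List.getD_eq_getElem _ _ hii]
        rcases le_total i k with h | h
        · exact (hLpre i k h).getElem hii
        · exact ((hLpre k i h).getElem hi).symm
      have hωL : ∀ k, pfx ω (s.length + 1 + k) = L k := by
        intro k
        apply List.ext_getElem (by rw [pfx_length, hLlen])
        intro i hi1 hi2
        rw [pfx_getElem]
        exact hωget k i hi2
      have hmem1 : ω ∈ Gamma (s ++ [x]) := by
        show pfx ω (s ++ [x]).length = s ++ [x]
        have := hωL 0
        simpa [hL0] using this
      have hmem0 : ω ∈ Gamma s := by
        show pfx ω s.length = s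
        have h1' : pfx ω s.length ++ [ω s.length] = s ++ [x] := by
          rw [← pfx_succ]
          have := hωL 0
          simpa [hL0] using this
        exact (List.append_inj' h1' rfl).1
      have hliminf : liminfP M ω ≤ M (s ++ [x]) := by
        apply liminf_le_of_frequently_le'
        apply Filter.Eventually.frequently
        filter_upwards [eventually_ge_atTop (s.length + 1)] with n hn
        obtain ⟨k, rfl⟩ : ∃ k, n = s.length + 1 + k := ⟨n - (s.length + 1), by omega⟩
        rw [hωL k]
        exact (hLM k).trans (le_of_eq (by rw [hL0]))
      calc g x = f ω := (hg x ω hmem1).symm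
      _ ≤ liminfP M ω := hlim ω hmem0
      _ ≤ M (s ++ [x]) := hliminf
    calc Q s g ≤ Q s (fun x => M (s ++ [x])) := h4 _ _ ⟨B, hgB⟩ ⟨C, fun x => hC _⟩ hMg
    _ ≤ M s := hsm s
end
end
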